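/- A preference ⪰* is a minimum upper bound (with respect to single-crossing dominance S) of a set P of preferences if and only if for every ≿-comparable pair x ≿ y: x ⪰* y iff there is a P-chain from x to y, and y ⪰* x iff there is no strict P-chain from x to y. -/

import Mathlib

variable {X : Type*}

/-- Strict part of a binary relation. -/
def SPref (R : X → X → Prop) (x y : X) : Prop := R x y ∧ ¬ R y x

/-- A preference: a complete and transitive binary relation. -/
def IsPref (R : X → X → Prop) : Prop := (∀ x y, R x y ∨ R y x) ∧ Transitive R

/-- Single-crossing dominance (`R'` dominates `R`) w.r.t. the partial order `≤`. -/
def SC [PartialOrder X] (R' R : X → X → Prop) : Prop :=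
  ∀ x y : X, y ≤ x → (R x y → R' x y) ∧ (SPref R x y → SPref R' x y)

/-- Upper bound of a set of preferences w.r.t. single-crossing dominance. -/
def IsUB [PartialOrder X] (P : Set (X → X → Prop)) (R' : X → X → Prop) : Prop :=
  IsPref R' ∧ ∀ R ∈ P, SC R' R

/-- Minimum upper bound of a set of preferences w.r.t. single-crossing dominance. -/
def IsMUB [PartialOrder X] (P : Set (X → X → Prop)) (Rs : X → X → Prop) : Prop :=
  IsUB P Rs ∧ ∀ R'', IsUB P R'' → SC R'' Rs

/-- A `P`-chain from `x` to `y`: a `≤`-decreasing finite sequence from `x` to `y`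
such that at each step some preference in `P` weakly prefers the earlier element. -/
def PChain [PartialOrder X] (P : Set (X → X → Prop)) (x y : X) : Prop :=
  ∃ (K : ℕ) (w : ℕ → X), 0 < K ∧ w 0 = x ∧ w (K - 1) = y ∧
    ∀ k, k + 1 < K → w (k + 1) ≤ w k ∧ ∃ R ∈ P, R (w k) (w (k + 1))

/-- A strict `P`-chain: a `P`-chain in which some step is strictly preferred by some
member of `P`. -/
def StrictPChain [PartialOrder X] (P : Set (X → X → Prop)) (x y : X) : Prop :=
  ∃ (K : ℕ) (w : ℕ → X), 0 < K ∧ w 0 = x ∧ w (K - 1) = y ∧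
    (∀ k, k + 1 < K → w (k + 1) ≤ w k ∧ ∃ R ∈ P, R (w k) (w (k + 1))) ∧
    ∃ k, k + 1 < K ∧ ∃ R ∈ P, SPref R (w k) (w (k + 1))

section Aux

variable [PartialOrder X] {P : Set (X → X → Prop)}

/-- A single chain step. -/
def Stp (P : Set (X → X → Prop)) (a b : X) : Prop := b ≤ a ∧ ∃ R ∈ P, R a b

/-- A single strict chain step. -/
def SStp (P : Set (X → X → Prop)) (a b : X) : Prop := b ≤ a ∧ ∃ R ∈ P, SPref R a b

/-- Chain reachability. -/
def Tc (P : Set (X → X → Prop)) : X → X → Prop := Relation.ReflTransGen (Stp P)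

/-- Strict chain reachability. -/
def Sc (P : Set (X → X → Prop)) (a b : X) : Prop :=
  ∃ c d, Tc P a c ∧ SStp P c d ∧ Tc P d b

lemma sstp_stp {a b : X} (h : SStp P a b) : Stp P a b := by
  obtain ⟨h1, R, hR, hs⟩ := h
  exact ⟨h1, R, hR, hs.1⟩

lemma tc_le {a b : X} (h : Tc P a b) : b ≤ a := by
  induction h with
  | refl => exact le_rfl
  | tail _ hstep ih => exact hstep.1.trans ih

lemma sc_tc {a b : X} (h : Sc P a b) : Tc P a b := by
  obtain ⟨c, d, h1, h2, h3⟩ := h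
  exact (h1.trans (Relation.ReflTransGen.single (sstp_stp h2))).trans h3

lemma sc_irrefl {a : X} : ¬ Sc P a a := by
  rintro ⟨c, d, h1, h2, h3⟩
  have hcd : c = d := le_antisymm ((tc_le h1).trans (tc_le h3)) h2.1
  obtain ⟨_, R, hR, hs⟩ := h2
  subst hcd
  exact hs.2 hs.1

lemma tc_sc {a b c : X} (h : Tc P a b) (h' : Sc P b c) : Sc P a c := by
  obtain ⟨u, v, h1, h2, h3⟩ := h'
  exact ⟨u, v, h.trans h1, h2, h3⟩

lemma sc_tc_right {a b c : X} (h : Sc P a b) (h' : Tc P b c) : Sc P a c := by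
  obtain ⟨u, v, h1, h2, h3⟩ := h
  exact ⟨u, v, h1, h2, h3.trans h'⟩

lemma tc_of_steps {K : ℕ} {w : ℕ → X}
    (hstep : ∀ k, k + 1 < K → Stp P (w k) (w (k + 1))) :
    ∀ j, j < K → ∀ i, i ≤ j → Tc P (w i) (w j) := by
  intro j
  induction j with
  | zero =>
    intro _ i hi
    obtain rfl : i = 0 := Nat.le_zero.mp hi
    exact Relation.ReflTransGen.refl
  | succ j ih =>
    intro hj i hi
    rcases Nat.lt_or_ge i (j + 1) with h | h
    · exact (ih (Nat.lt_of_succ_lt hj) i (Nat.lt_succ_iff.mp h)).tail (hstep j hj)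
    · obtain rfl : i = j + 1 := le_antisymm hi h
      exact Relation.ReflTransGen.refl

lemma pchain_tc {x y : X} (h : PChain P x y) : Tc P x y := by
  obtain ⟨K, w, hK, h0, hK1, hstep⟩ := h
  subst h0; subst hK1
  exact tc_of_steps (fun k hk => hstep k hk) (K - 1) (Nat.sub_lt hK one_pos) 0 (Nat.zero_le _)

lemma spchain_sc {x y : X} (h : StrictPChain P x y) : Sc P x y := by
  obtain ⟨K, w, hK, h0, hK1, hstep, k0, hk0, R, hR, hs⟩ := h
  subst h0; subst hK1
  refine ⟨w k0, w (k0 + 1), ?_, ⟨(hstep k0 hk0).1, R, hR, hs⟩, ?_⟩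
  · exact tc_of_steps (fun k hk => hstep k hk) k0 (Nat.lt_of_succ_lt hk0) 0 (Nat.zero_le _)
  · exact tc_of_steps (fun k hk => hstep k hk) (K - 1) (Nat.sub_lt hK one_pos) (k0 + 1)
      (Nat.le_sub_one_of_lt hk0)

lemma pchain_refl {x : X} : PChain P x x :=
  ⟨1, fun _ => x, one_pos, rfl, rfl, fun k hk => absurd hk (by omega)⟩

lemma pchain_head {x z y : X} (hxz : Stp P x z) (h : PChain P z y) : PChain P x y := by
  obtain ⟨K, w, hK, h0, hK1, hstep⟩ := h
  obtain ⟨K, rfl⟩ : ∃ K', K = K' + 1 := ⟨K - 1, (Nat.succ_pred_eq_of_pos hK).symm⟩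
  refine ⟨K + 2, fun k => match k with | 0 => x | k + 1 => w k, Nat.succ_pos _, rfl, ?_, ?_⟩
  · show w K = y
    simpa using hK1
  · intro k hk
    match k with
    | 0 => rw [show (fun k => match k with | 0 => x | k + 1 => w k) 1 = w 0 from rfl, h0]
           exact hxz
    | k + 1 => exact hstep k (by omega)

lemma tc_pchain {x y : X} (h : Tc P x y) : PChain P x y := by
  induction h using Relation.ReflTransGen.head_induction_on with
  | refl => exact pchain_refl
  | head hstep _ ih => exact pchain_head hstep ih

lemma spchain_single {a b : X} (h : SStp P a b) : StrictPChain P a b := by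
  refine ⟨2, fun k => match k with | 0 => a | _ + 1 => b, two_pos, rfl, rfl, ?_, 0, one_lt_two, ?_⟩
  · intro k hk
    match k with
    | 0 => exact sstp_stp h
    | k + 1 => omega
  · exact h.2

lemma spchain_head {x z y : X} (hxz : Stp P x z) (h : StrictPChain P z y) :
    StrictPChain P x y := by
  obtain ⟨K, w, hK, h0, hK1, hstep, k0, hk0, R, hR, hs⟩ := h
  obtain ⟨K, rfl⟩ : ∃ K', K = K' + 1 := ⟨K - 1, (Nat.succ_pred_eq_of_pos hK).symm⟩
  refine ⟨K + 2, fun k => match k with | 0 => x | k + 1 => w k, Nat.succ_pos _, rfl, ?_, ?_,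
    k0 + 1, by omega, R, hR, hs⟩
  · show w K = y
    simpa using hK1
  · intro k hk
    match k with
    | 0 => rw [show (fun k => match k with | 0 => x | k + 1 => w k) 1 = w 0 from rfl, h0]
           exact hxz
    | k + 1 => exact hstep k (by omega)

lemma spchain_tail {x z y : X} (h : StrictPChain P x z) (hzy : Stp P z y) :
    StrictPChain P x y := by
  obtain ⟨K, w, hK, h0, hK1, hstep, k0, hk0, R, hR, hs⟩ := h
  obtain ⟨K, rfl⟩ : ∃ K', K = K' + 1 := ⟨K - 1, (Nat.succ_pred_eq_of_pos hK).symm⟩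
  simp only [Nat.add_sub_cancel] at hK1
  refine ⟨K + 2, fun k => if k < K + 1 then w k else y, Nat.succ_pos _, ?_, ?_, ?_, k0, ?_, R, hR, ?_⟩
  · show (if 0 < K + 1 then w 0 else y) = x
    rw [if_pos (Nat.succ_pos K)]; exact h0
  · show (if K + 1 < K + 1 then w (K + 1) else y) = y
    rw [if_neg (lt_irrefl _)]
  · intro k hk
    dsimp only
    rcases Nat.lt_or_ge (k + 1) (K + 1) with h1 | h1
    · rw [if_pos h1, if_pos (Nat.lt_of_succ_lt h1)]
      exact hstep k h1
    · obtain rfl : k = K := by omega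
      rw [if_neg (by omega), if_pos (by omega), hK1]
      exact hzy
  · omega
  · dsimp only
    rw [if_pos (by omega), if_pos (by omega)]
    exact hs

lemma sc_spchain {x y : X} (h : Sc P x y) : StrictPChain P x y := by
  obtain ⟨c, d, h1, h2, h3⟩ := h
  have mid : StrictPChain P c y := by
    induction h3 with
    | refl => exact spchain_single h2
    | tail _ hstep ih => exact spchain_tail ih hstep
  clear h2
  induction h1 using Relation.ReflTransGen.head_induction_on with
  | refl => exact mid
  | head hstep _ ih => exact spchain_head hstep ih

lemma isUB_iff {R' : X → X → Prop} :
    IsUB P R' ↔ IsPref R' ∧ (∀ a b, Stp P a b → R' a b) ∧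
      (∀ a b, SStp P a b → SPref R' a b) := by
  constructor
  · rintro ⟨hpref, hsc⟩
    refine ⟨hpref, ?_, ?_⟩
    · rintro a b ⟨hba, R, hR, hr⟩
      exact (hsc R hR a b hba).1 hr
    · rintro a b ⟨hba, R, hR, hr⟩
      exact (hsc R hR a b hba).2 hr
  · rintro ⟨hpref, h1, h2⟩
    refine ⟨hpref, fun R hR a b hba => ⟨fun hr => h1 a b ⟨hba, R, hR, hr⟩,
      fun hr => h2 a b ⟨hba, R, hR, hr⟩⟩⟩

lemma ub_tc {R' : X → X → Prop} (h : IsUB P R') {a b : X} (htc : Tc P a b) : R' a b := by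
  induction htc with
  | refl => exact (h.1.1 a a).elim id id
  | tail _ hstep ih => exact h.1.2 ih ((isUB_iff.mp h).2.1 _ _ hstep)

lemma pref_mid {R : X → X → Prop} (h : IsPref R) {a c d b : X}
    (h1 : R a c) (h2 : SPref R c d) (h3 : R d b) : SPref R a b :=
  ⟨h.2 (h.2 h1 h2.1) h3, fun hba => h2.2 (h.2 (h.2 h3 hba) h1)⟩

lemma ub_sc {R' : X → X → Prop} (h : IsUB P R') {a b : X} (hsc : Sc P a b) : SPref R' a b := by
  obtain ⟨c, d, h1, h2, h3⟩ := hsc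
  exact pref_mid h.1 (ub_tc h h1) ((isUB_iff.mp h).2.2 _ _ h2) (ub_tc h h3)

/-- The key construction: if there is no strict chain from `x` to `y`, there is an upper
bound putting `y` weakly above `x`, and strictly above if there is no chain either. -/
lemma exists_ub_flip (x y : X) (hnS : ¬ Sc P x y) :
    ∃ R'', IsUB P R'' ∧ R'' y x ∧ (¬ Tc P x y → ¬ R'' x y) := by
  set T' : X → X → Prop := fun a b => Tc P a b ∨ (Tc P a y ∧ Tc P x b) with hT'
  have T'refl : ∀ a, T' a a := fun a => Or.inl Relation.ReflTransGen.refl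
  have T'trans : ∀ a b c, T' a b → T' b c → T' a c := by
    rintro a b c (h1 | ⟨h1, h1'⟩) (h2 | ⟨h2, h2'⟩)
    · exact Or.inl (h1.trans h2)
    · exact Or.inr ⟨h1.trans h2, h2'⟩
    · exact Or.inr ⟨h1, h1'.trans h2⟩
    · exact Or.inr ⟨h1, h2'⟩
  have compat : ∀ a b, Sc P a b → T' b a → False := by
    rintro a b hab (h | ⟨h1, h2⟩)
    · exact sc_irrefl (sc_tc_right hab h)
    · exact hnS (sc_tc_right (tc_sc h2 hab) h1)
  let s : Setoid X := ⟨fun a b => T' a b ∧ T' b a,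
    ⟨fun a => ⟨T'refl a, T'refl a⟩, fun h => ⟨h.2, h.1⟩,
     fun h h' => ⟨T'trans _ _ _ h.1 h'.1, T'trans _ _ _ h'.2 h.2⟩⟩⟩
  let m : X → Quotient s := fun a => Quotient.mk s a
  let r : Quotient s → Quotient s → Prop :=
    Quotient.lift₂ (fun a b => T' b a) (by
      intro a b a' b' ha hb
      exact propext ⟨fun h => T'trans _ _ _ hb.2 (T'trans _ _ _ h ha.1),
        fun h => T'trans _ _ _ hb.1 (T'trans _ _ _ h ha.2)⟩)
  have hm : ∀ a b, r (m a) (m b) ↔ T' b a := fun a b => Iff.rfl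
  have hmeq : ∀ a b, m a = m b → T' a b ∧ T' b a := fun a b h => Quotient.exact h
  haveI : IsPartialOrder (Quotient s) r := by
    refine { refl := ?_, trans := ?_, antisymm := ?_ }
    · intro q; induction q using Quotient.ind with | _ a => exact T'refl a
    · intro q1 q2 q3
      induction q1 using Quotient.ind with | _ a =>
      induction q2 using Quotient.ind with | _ b =>
      induction q3 using Quotient.ind with | _ c =>
      exact fun h1 h2 => T'trans _ _ _ h2 h1
    · intro q1 q2
      induction q1 using Quotient.ind with | _ a =>
      induction q2 using Quotient.ind with | _ b =>
      exact fun h1 h2 => Quotient.sound (⟨h2, h1⟩ : T' a b ∧ T' b a)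
  obtain ⟨sL, hlin, hext⟩ := extend_partialOrder r
  have hanti : ∀ q1 q2, sL q1 q2 → sL q2 q1 → q1 = q2 := fun q1 q2 =>
    hlin.toIsPartialOrder.toAntisymm.antisymm q1 q2
  have htot : ∀ q1 q2, sL q1 q2 ∨ sL q2 q1 := fun q1 q2 => hlin.toTotal.total q1 q2
  have htr : ∀ q1 q2 q3, sL q1 q2 → sL q2 q3 → sL q1 q3 := fun q1 q2 q3 =>
    hlin.toIsPartialOrder.toIsPreorder.toIsTrans.trans q1 q2 q3
  have hextm : ∀ a b, T' b a → sL (m a) (m b) := fun a b h => hext (m a) (m b) h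
  refine ⟨fun a b => sL (m b) (m a), ?_, ?_, ?_⟩
  · rw [isUB_iff]
    refine ⟨⟨fun a b => (htot (m b) (m a)), fun a b c h1 h2 => htr _ _ _ h2 h1⟩, ?_, ?_⟩
    · intro a b hab
      exact hextm b a (Or.inl (Relation.ReflTransGen.single hab))
    · intro a b hab
      have hsc : Sc P a b := ⟨a, b, Relation.ReflTransGen.refl, hab, Relation.ReflTransGen.refl⟩
      refine ⟨hextm b a (Or.inl (sc_tc hsc)), fun hba => ?_⟩
      have := hmeq _ _ (hanti _ _ hba (hextm b a (Or.inl (sc_tc hsc))))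
      exact compat a b hsc this.2
  · exact hextm x y (Or.inr ⟨Relation.ReflTransGen.refl, Relation.ReflTransGen.refl⟩)
  · intro hnT hxy
    have hyx : sL (m x) (m y) :=
      hextm x y (Or.inr ⟨Relation.ReflTransGen.refl, Relation.ReflTransGen.refl⟩)
    have := hmeq _ _ (hanti _ _ hxy hyx)
    rcases this.2 with h | ⟨h, _⟩ <;> exact hnT h

end Aux

/-- Characterisation theorem: a preference `Rs` is a minimum upper bound of `P` iff for
every comparable pair `x ≥ y`, `Rs x y` holds iff there is a `P`-chain from `x` to `y`,
and `Rs y x` holds iff there is no strict `P`-chain from `x` to `y`. -/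
theorem mub_characterisation (X : Type*) [Nonempty X] [PartialOrder X]
    (P : Set (X → X → Prop)) (hP : ∀ R ∈ P, IsPref R)
    (Rs : X → X → Prop) (hRs : IsPref Rs) :
    IsMUB P Rs ↔
      ∀ x y : X, y ≤ x →
        (Rs x y ↔ PChain P x y) ∧ (Rs y x ↔ ¬ StrictPChain P x y) := by
  constructor
  · rintro ⟨hub, hmin⟩ x y hyx
    constructor
    · constructor
      · intro hxy
        by_contra hnpc
        have hnT : ¬ Tc P x y := fun h => hnpc (tc_pchain h)
        have hnS : ¬ Sc P x y := fun h => hnT (sc_tc h)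
        obtain ⟨R'', hub'', _, hnxy⟩ := exists_ub_flip x y hnS
        exact hnxy hnT ((hmin R'' hub'' x y hyx).1 hxy)
      · intro hpc
        exact ub_tc hub (pchain_tc hpc)
    · constructor
      · intro hyx' hspc
        exact (ub_sc hub (spchain_sc hspc)).2 hyx'
      · intro hnspc
        have hnS : ¬ Sc P x y := fun h => hnspc (sc_spchain h)
        obtain ⟨R'', hub'', hflip, _⟩ := exists_ub_flip x y hnS
        by_contra hnyx
        have hxy : Rs x y := (hRs.1 x y).elim id (fun h => absurd h hnyx)
        exact ((hmin R'' hub'' x y hyx).2 ⟨hxy, hnyx⟩).2 hflip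
  · intro h
    have hub : IsUB P Rs := by
      rw [isUB_iff]
      refine ⟨hRs, ?_, ?_⟩
      · intro a b hab
        exact (h a b hab.1).1.mpr (tc_pchain (Relation.ReflTransGen.single hab))
      · intro a b hab
        refine ⟨(h a b hab.1).1.mpr (tc_pchain (Relation.ReflTransGen.single (sstp_stp hab))),
          fun hba => ?_⟩
        exact ((h a b hab.1).2.mp hba) (spchain_single hab)
    refine ⟨hub, fun R'' hub'' a b hba => ⟨?_, ?_⟩⟩
    · intro hab
      exact ub_tc hub'' (pchain_tc ((h a b hba).1.mp hab))
    · rintro ⟨hab, hnba⟩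
      have hspc : StrictPChain P a b := by
        by_contra hn
        exact hnba ((h a b hba).2.mpr hn)
      exact ub_sc hub'' (spchain_sc hspc)
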